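/- In the correlated Erdős–Rényi model, let 0 ≤ ℓ ≤ n and assume (ℓ−1)qs ≥ 12nq² + 2 and (ℓ−1)qs ≥ 16·max{1, n−ℓ}·log n. Then with probability at least 1 − 3/n the following holds simultaneously: for every permutation π1 of [n] with |{i : π1(i) ≠ π*(i)}| ≤ n − ℓ, setting w_{ik} = Σ_{j∈[n]} A_{ij}B_{k,π1(j)}, one has min_{i∈[n]} w_{i,π*(i)} > max_{(i,k): k≠π*(i)} w_{ik}; hence the index pairs of the n largest values among {w_{ik}} are exactly {(i,π*(i)): i∈[n]}, and the final step of the seeded matching algorithm outputs π̂ = π*. -/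

import Mathlib

open MeasureTheory ProbabilityTheory Finset
open scoped ENNReal Classical

noncomputable section

namespace GraphMatching

/-- Joint law of the pair `(A_{ij}, B_{π*(i)π*(j)})` of edge indicators (for `i<j`) in the
correlated Erdős–Rényi model `G(n,q,s)`: `P(1,1) = qs`, `P(1,0) = P(0,1) = q(1−s)`,
`P(0,0) = 1 − 2q + qs`.  (This encodes `A_{ij} ~ Bern(q)` and, conditionally on `A`,
`B ~ Bern(s)` on edges of `A` and `B ~ Bern(q(1−s)/(1−q))` on non-edges.) -/
def erPairLaw (q s : ℝ) : Measure (Bool × Bool) :=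
  ENNReal.ofReal (q * s) • Measure.dirac (true, true)
    + ENNReal.ofReal (q * (1 - s)) • Measure.dirac (true, false)
    + ENNReal.ofReal (q * (1 - s)) • Measure.dirac (false, true)
    + ENNReal.ofReal (1 - 2 * q + q * s) • Measure.dirac (false, false)

/-- The correlated Erdős–Rényi model `G(n,q,s)` with latent permutation `π`:
`A`, `B` are symmetric 0–1 matrices with zero diagonal and the pairs
`(A_{ij}, B_{π(i)π(j)})`, `i < j`, are i.i.d. with law `erPairLaw q s`. -/
structure IsCorrER {Ω : Type*} [MeasurableSpace Ω] (P : Measure Ω)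
    (n : ℕ) (q s : ℝ) (A B : Ω → Fin n → Fin n → Bool) (π : Equiv.Perm (Fin n)) : Prop where
  symmA : ∀ ω i j, A ω i j = A ω j i
  symmB : ∀ ω i j, B ω i j = B ω j i
  diagA : ∀ ω i, A ω i i = false
  diagB : ∀ ω i, B ω i i = false
  meas : ∀ i j : Fin n, Measurable fun ω => (A ω i j, B ω (π i) (π j))
  indep : iIndepFun
    (fun (p : {p : Fin n × Fin n // p.1 < p.2}) ω =>
      (A ω p.1.1 p.1.2, B ω (π p.1.1) (π p.1.2))) P
  law : ∀ i j : Fin n, i < j →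
    P.map (fun ω => (A ω i j, B ω (π i) (π j))) = erPairLaw q s

variable {n : ℕ}

/-- Open neighborhood `N_A(i)`. -/
def nbr (A : Fin n → Fin n → Bool) (i : Fin n) : Finset (Fin n) :=
  univ.filter fun j => A i j = true

/-- Degree `a_i`. -/
def deg (A : Fin n → Fin n → Bool) (i : Fin n) : ℕ := (nbr A i).card

/-- Closed neighborhood `N_A[i]`. -/
def cnbr (A : Fin n → Fin n → Bool) (i : Fin n) : Finset (Fin n) := insert i (nbr A i)

/-- Standardized outdegree `a_j^{(i)} = (Σ_{ℓ∉N_A[i]}(A_{ℓj}−q))/√((n−a_i−1)q(1−q))`. -/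
def outdeg (q : ℝ) (A : Fin n → Fin n → Bool) (i j : Fin n) : ℝ :=
  (∑ ℓ ∈ (cnbr A i)ᶜ, ((if A ℓ j = true then (1 : ℝ) else 0) - q)) /
    Real.sqrt (((n : ℝ) - deg A i - 1) * q * (1 - q))

/-- `Binomc(k,q)(I)`: probability that the standardized binomial `(X−kq)/√(kq(1−q))`,
`X ~ Binom(k,q)`, lies in `I`. -/
def binomcProb (k : ℕ) (q : ℝ) (I : Set ℝ) : ℝ :=
  ∑ x ∈ Finset.range (k + 1),
    (k.choose x : ℝ) * q ^ x * (1 - q) ^ (k - x) *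
      (if ((x : ℝ) - k * q) / Real.sqrt (k * q * (1 - q)) ∈ I then 1 else 0)

/-- Centered degree profile `μ̄_i(I)` (a finite signed measure, evaluated at `I`). -/
def profile (q : ℝ) (A : Fin n → Fin n → Bool) (i : Fin n) (I : Set ℝ) : ℝ :=
  (((nbr A i).filter fun j => outdeg q A i j ∈ I).card : ℝ) / (deg A i : ℝ)
    - binomcProb (n - deg A i - 1) q I

/-- The `ℓ`-th interval of the uniform partition of `[-1/2,1/2]` into `L` pieces. -/
def bin (L ℓ : ℕ) : Set ℝ :=
  Set.Ico (-(1 / 2) + (ℓ : ℝ) / L) (-(1 / 2) + ((ℓ : ℝ) + 1) / L)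

/-- The degree-profile distance statistic `Z_{ik} = Σ_{ℓ∈[L]} |μ̄_i(I_ℓ) − ν̄_k(I_ℓ)|`. -/
def Zstat (q : ℝ) (L : ℕ) (A B : Fin n → Fin n → Bool) (i k : Fin n) : ℝ :=
  ∑ ℓ ∈ Finset.range L, |profile q A i (bin L ℓ) - profile q B k (bin L ℓ)|

/-- Binomial upper tail `P(Binom(m,q) ≥ k)`. -/
def binomTail (m : ℕ) (q : ℝ) (k : ℕ) : ℝ :=
  ∑ x ∈ Finset.Icc k m, (m.choose x : ℝ) * q ^ x * (1 - q) ^ (m - x)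

/-- Seed similarity count `n_{ik} = Σ_{j∈S} A_{ij} B_{k,π0(j)}`, with seeds `π0 = π|_S`. -/
def seedCount (A B : Fin n → Fin n → Bool) (π : Equiv.Perm (Fin n)) (S : Finset (Fin n))
    (i k : Fin n) : ℕ :=
  (S.filter fun j => A i j = true ∧ B k (π j) = true).card

/-- The weight `w(π̃1) = Σ_{i∈Sᶜ} H_{i,π̃1(i)}`, `H_{ik} = 1{n_{ik} ≥ κ}`, of the bipartite
matching induced on `Sᶜ × (π S)ᶜ` by a permutation `π1` of `[n]` extending the seeds. -/
def matchWeight (A B : Fin n → Fin n → Bool) (π : Equiv.Perm (Fin n)) (S : Finset (Fin n))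
    (κ : ℝ) (π1 : Equiv.Perm (Fin n)) : ℕ :=
  (Sᶜ.filter fun i => κ ≤ (seedCount A B π S i (π1 i) : ℝ)).card

/-- Final similarity `w_{ik} = Σ_{j∈[n]} A_{ij} B_{k,π1(j)}`. -/
def wSim (A B : Fin n → Fin n → Bool) (π1 : Equiv.Perm (Fin n)) (i k : Fin n) : ℕ :=
  (univ.filter fun j => A i j = true ∧ B k (π1 j) = true).card


/-! ### Auxiliary lemmas -/

section Tail

variable {Ω : Type*} [MeasurableSpace Ω] {P : Measure Ω} [IsProbabilityMeasure P]
  {ι : Type*}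

omit [MeasurableSpace Ω] in
lemma prod_ind_eq (S : Finset ι) (E : ι → Set Ω) (ω : Ω) :
    (∏ j ∈ S, (if ω ∈ E j then (1:ℝ) else 0))
      = Set.indicator (⋂ j ∈ S, E j) (fun _ => (1:ℝ)) ω := by
  rw [Finset.prod_boole, Set.indicator_apply]
  by_cases h : ω ∈ ⋂ j ∈ S, E j
  · rw [if_pos h, if_pos]
    intro j hj
    exact Set.mem_iInter₂.1 h j hj
  · rw [if_neg h, if_neg]
    intro hall
    exact h (Set.mem_iInter₂.2 hall)

lemma integrable_prod_ind (S : Finset ι) (E : ι → Set Ω) (hE : ∀ j, MeasurableSet (E j)) (c : ℝ) :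
    Integrable (fun ω => c * ∏ j ∈ S, (if ω ∈ E j then (1:ℝ) else 0)) P := by
  have h : (fun ω => c * ∏ j ∈ S, (if ω ∈ E j then (1:ℝ) else 0))
      = Set.indicator (⋂ j ∈ S, E j) (fun _ => c) := by
    funext ω
    rw [prod_ind_eq, Set.indicator_apply, Set.indicator_apply]
    split_ifs <;> simp
  rw [h]
  exact (integrable_const c).indicator (MeasurableSet.biInter S.countable_toSet fun j _ => hE j)

lemma integral_prod_ind (S : Finset ι) (E : ι → Set Ω) (hE : ∀ j, MeasurableSet (E j)) :
    ∫ ω, (∏ j ∈ S, (if ω ∈ E j then (1:ℝ) else 0)) ∂P = (P (⋂ j ∈ S, E j)).toReal := by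
  have h : (fun ω => ∏ j ∈ S, (if ω ∈ E j then (1:ℝ) else 0))
      = Set.indicator (⋂ j ∈ S, E j) (fun _ => (1:ℝ)) := funext fun ω => prod_ind_eq S E ω
  rw [h]
  simpa [measureReal_def] using
    integral_indicator_const (μ := P) (1:ℝ)
      (MeasurableSet.biInter S.countable_toSet fun j _ => hE j)

omit [MeasurableSpace Ω] in
lemma prod_affine_expand (J : Finset ι) (E : ι → Set Ω) (c : ℝ) (ω : Ω) :
    (∏ j ∈ J, (c * (if ω ∈ E j then (1:ℝ) else 0) + 1))
      = ∑ S ∈ J.powerset, c ^ S.card * ∏ j ∈ S, (if ω ∈ E j then (1:ℝ) else 0) := by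
  rw [Finset.prod_add]
  refine Finset.sum_congr rfl fun S hS => ?_
  rw [Finset.prod_const_one, mul_one, Finset.prod_mul_distrib, Finset.prod_const]

lemma integrable_prod_affine (J : Finset ι) (E : ι → Set Ω) (hE : ∀ j, MeasurableSet (E j))
    (c : ℝ) :
    Integrable (fun ω => ∏ j ∈ J, (c * (if ω ∈ E j then (1:ℝ) else 0) + 1)) P := by
  have h : (fun ω => ∏ j ∈ J, (c * (if ω ∈ E j then (1:ℝ) else 0) + 1))
      = fun ω => ∑ S ∈ J.powerset, c ^ S.card * ∏ j ∈ S, (if ω ∈ E j then (1:ℝ) else 0) :=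
    funext fun ω => prod_affine_expand J E c ω
  rw [h]
  exact integrable_finset_sum _ fun S _ => integrable_prod_ind S E hE _

lemma integral_tail_core (J : Finset ι) (E : ι → Set Ω) (hE : ∀ j, MeasurableSet (E j))
    (θ c : ℝ) (hθ : 0 ≤ θ)
    (hP : ∀ S ⊆ J, P (⋂ j ∈ S, E j) = ENNReal.ofReal (θ ^ S.card)) :
    ∫ ω, (∏ j ∈ J, (c * (if ω ∈ E j then (1:ℝ) else 0) + 1)) ∂P = (c * θ + 1) ^ J.card := by
  have h1 : ∫ ω, (∏ j ∈ J, (c * (if ω ∈ E j then (1:ℝ) else 0) + 1)) ∂P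
      = ∑ S ∈ J.powerset, c ^ S.card * (P (⋂ j ∈ S, E j)).toReal := by
    simp_rw [prod_affine_expand J E c]
    rw [integral_finset_sum _ fun S _ => integrable_prod_ind S E hE _]
    refine Finset.sum_congr rfl fun S hS => ?_
    rw [integral_const_mul, integral_prod_ind S E hE]
  rw [h1]
  have h2 : ∀ S ∈ J.powerset, c ^ S.card * (P (⋂ j ∈ S, E j)).toReal = (c * θ) ^ S.card := by
    intro S hS
    rw [hP S (Finset.mem_powerset.1 hS), ENNReal.toReal_ofReal (pow_nonneg hθ _), mul_pow]
  rw [Finset.sum_congr rfl h2]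
  have h3 : ((c * θ + 1) : ℝ) ^ J.card = ∏ j ∈ J, (c * θ + 1) := (Finset.prod_const _).symm
  rw [h3, Finset.prod_add]
  refine Finset.sum_congr rfl fun S hS => ?_
  rw [Finset.prod_const_one, mul_one, Finset.prod_const]

omit [MeasurableSpace Ω] in
lemma prod_two_pow (J : Finset ι) (E : ι → Set Ω) (ω : Ω) :
    (∏ j ∈ J, ((1:ℝ) * (if ω ∈ E j then (1:ℝ) else 0) + 1))
      = (2:ℝ) ^ (J.filter fun j => ω ∈ E j).card := by
  have h : ∀ j, (1:ℝ) * (if ω ∈ E j then (1:ℝ) else 0) + 1 = if ω ∈ E j then 2 else 1 := by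
    intro j; split_ifs <;> norm_num
  simp_rw [h]
  rw [Finset.prod_ite, Finset.prod_const, Finset.prod_const, one_pow, mul_one]

omit [MeasurableSpace Ω] in
lemma prod_half_pow (J : Finset ι) (E : ι → Set Ω) (ω : Ω) :
    (∏ j ∈ J, ((-2⁻¹:ℝ) * (if ω ∈ E j then (1:ℝ) else 0) + 1))
      = (2⁻¹:ℝ) ^ (J.filter fun j => ω ∈ E j).card := by
  have h : ∀ j, (-2⁻¹:ℝ) * (if ω ∈ E j then (1:ℝ) else 0) + 1 = if ω ∈ E j then 2⁻¹ else 1 := by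
    intro j; split_ifs <;> norm_num
  simp_rw [h]
  rw [Finset.prod_ite, Finset.prod_const, Finset.prod_const, one_pow, mul_one]

lemma filter_inst_irrel {α : Type*} (s : Finset α) (p : α → Prop)
    (h1 h2 : DecidablePred p) :
    @Finset.filter α p h1 s = @Finset.filter α p h2 s := by
  have : h1 = h2 := Subsingleton.elim _ _
  subst this; rfl

lemma tail_upper (J : Finset ι) (E : ι → Set Ω) (hE : ∀ j, MeasurableSet (E j))
    (θ : ℝ) (hθ : 0 ≤ θ)
    (hP : ∀ S ⊆ J, P (⋂ j ∈ S, E j) = ENNReal.ofReal (θ ^ S.card))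
    (N : Ω → ℕ) (hN : ∀ ω, N ω = (J.filter fun j => ω ∈ E j).card) (m : ℕ) :
    (2:ℝ) ^ m * (P {ω | m ≤ N ω}).toReal ≤ (1 + θ) ^ J.card := by
  have hnonneg : 0 ≤ᵐ[P]
      fun ω => ∏ j ∈ J, ((1:ℝ) * (if ω ∈ E j then (1:ℝ) else 0) + 1) := by
    have h0 : ∀ ω : Ω, (0:ℝ) ≤ ∏ j ∈ J, ((1:ℝ) * (if ω ∈ E j then (1:ℝ) else 0) + 1) := by
      intro ω; rw [prod_two_pow]; positivity
    exact Filter.Eventually.of_forall h0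
  have hsub : {ω | m ≤ N ω}
      ⊆ {ω | (2:ℝ) ^ m ≤ ∏ j ∈ J, ((1:ℝ) * (if ω ∈ E j then (1:ℝ) else 0) + 1)} := by
    intro ω hω
    rw [Set.mem_setOf_eq, prod_two_pow]
    rw [Set.mem_setOf_eq, hN ω] at hω
    exact pow_le_pow_right₀ one_le_two hω
  have hmarkov := mul_meas_ge_le_integral_of_nonneg hnonneg
    (integrable_prod_affine J E hE 1) ((2:ℝ) ^ m)
  calc (2:ℝ) ^ m * (P {ω | m ≤ N ω}).toReal
      ≤ (2:ℝ) ^ m * (P {ω | (2:ℝ) ^ m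
          ≤ ∏ j ∈ J, ((1:ℝ) * (if ω ∈ E j then (1:ℝ) else 0) + 1)}).toReal := by
        refine mul_le_mul_of_nonneg_left ?_ (by positivity)
        exact ENNReal.toReal_mono (measure_ne_top _ _) (measure_mono hsub)
    _ ≤ ∫ ω, ∏ j ∈ J, ((1:ℝ) * (if ω ∈ E j then (1:ℝ) else 0) + 1) ∂P := hmarkov
    _ = (1 * θ + 1) ^ J.card := integral_tail_core J E hE θ 1 hθ hP
    _ = (1 + θ) ^ J.card := by ring_nf

lemma tail_lower (J : Finset ι) (E : ι → Set Ω) (hE : ∀ j, MeasurableSet (E j))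
    (θ : ℝ) (hθ : 0 ≤ θ)
    (hP : ∀ S ⊆ J, P (⋂ j ∈ S, E j) = ENNReal.ofReal (θ ^ S.card))
    (N : Ω → ℕ) (hN : ∀ ω, N ω = (J.filter fun j => ω ∈ E j).card) (k : ℕ) :
    (2⁻¹:ℝ) ^ k * (P {ω | N ω ≤ k}).toReal ≤ (1 - θ / 2) ^ J.card := by
  have hnonneg : 0 ≤ᵐ[P]
      fun ω => ∏ j ∈ J, ((-2⁻¹:ℝ) * (if ω ∈ E j then (1:ℝ) else 0) + 1) := by
    have h0 : ∀ ω : Ω, (0:ℝ) ≤ ∏ j ∈ J, ((-2⁻¹:ℝ) * (if ω ∈ E j then (1:ℝ) else 0) + 1) := by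
      intro ω; rw [prod_half_pow]; positivity
    exact Filter.Eventually.of_forall h0
  have hsub : {ω | N ω ≤ k}
      ⊆ {ω | (2⁻¹:ℝ) ^ k ≤ ∏ j ∈ J, ((-2⁻¹:ℝ) * (if ω ∈ E j then (1:ℝ) else 0) + 1)} := by
    intro ω hω
    rw [Set.mem_setOf_eq, prod_half_pow]
    rw [Set.mem_setOf_eq, hN ω] at hω
    exact pow_le_pow_of_le_one (by norm_num) (by norm_num) hω
  have hmarkov := mul_meas_ge_le_integral_of_nonneg hnonneg
    (integrable_prod_affine J E hE (-2⁻¹)) ((2⁻¹:ℝ) ^ k)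
  calc (2⁻¹:ℝ) ^ k * (P {ω | N ω ≤ k}).toReal
      ≤ (2⁻¹:ℝ) ^ k * (P {ω | (2⁻¹:ℝ) ^ k
          ≤ ∏ j ∈ J, ((-2⁻¹:ℝ) * (if ω ∈ E j then (1:ℝ) else 0) + 1)}).toReal := by
        refine mul_le_mul_of_nonneg_left ?_ (by positivity)
        exact ENNReal.toReal_mono (measure_ne_top _ _) (measure_mono hsub)
    _ ≤ ∫ ω, ∏ j ∈ J, ((-2⁻¹:ℝ) * (if ω ∈ E j then (1:ℝ) else 0) + 1) ∂P := hmarkov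
    _ = ((-2⁻¹:ℝ) * θ + 1) ^ J.card := integral_tail_core J E hE θ (-2⁻¹) hθ hP
    _ = (1 - θ / 2) ^ J.card := by ring_nf

end Tail

lemma biInter_finset_image {α β Ω : Type*} [DecidableEq β] (S : Finset α) (σ : α → β) (g : β → Set Ω) :
    ⋂ p ∈ S.image σ, g p = ⋂ j ∈ S, g (σ j) := by
  ext ω
  simp only [Set.mem_iInter, Finset.mem_image]
  constructor
  · intro h j hj
    exact h (σ j) ⟨j, hj, rfl⟩
  · rintro h p ⟨j, hj, rfl⟩
    exact h j hj

lemma erPairLaw_eval (q s : ℝ) (E : Set (Bool × Bool)) :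
    erPairLaw q s E
      = (if (true, true) ∈ E then ENNReal.ofReal (q * s) else 0)
        + (if (true, false) ∈ E then ENNReal.ofReal (q * (1 - s)) else 0)
        + (if (false, true) ∈ E then ENNReal.ofReal (q * (1 - s)) else 0)
        + (if (false, false) ∈ E then ENNReal.ofReal (1 - 2 * q + q * s) else 0) := by
  simp only [erPairLaw, Measure.coe_add, Measure.coe_smul, Pi.add_apply, Pi.smul_apply,
    Measure.dirac_apply, smul_eq_mul, Set.indicator_apply, Set.mem_setOf_eq]
  split_ifs <;> simp

section Model

variable {Ω : Type*} [MeasurableSpace Ω] {P : Measure Ω} [IsProbabilityMeasure P]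
  {n : ℕ} {q s : ℝ} {A B : Ω → Fin n → Fin n → Bool} {π : Equiv.Perm (Fin n)}

/-- The index type of the i.i.d. pairs. -/
abbrev PairIdx (n : ℕ) := {p : Fin n × Fin n // p.1 < p.2}

lemma IsCorrER.measA (h : IsCorrER P n q s A B π) (i j : Fin n) :
    Measurable fun ω => A ω i j := measurable_fst.comp (h.meas i j)

lemma IsCorrER.measB (h : IsCorrER P n q s A B π) (k m : Fin n) :
    Measurable fun ω => B ω k m := by
  have := measurable_snd.comp (h.meas (π.symm k) (π.symm m))
  simpa [Equiv.apply_symm_apply, Function.comp_def] using this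

lemma IsCorrER.prob_pair (h : IsCorrER P n q s A B π) (i j : Fin n) (hij : i < j)
    (E : Set (Bool × Bool)) :
    P ((fun ω => (A ω i j, B ω (π i) (π j))) ⁻¹' E) = erPairLaw q s E := by
  rw [← h.law i j hij, Measure.map_apply (h.meas i j) .of_discrete]

lemma IsCorrER.basic (h : IsCorrER P n q s A B π) (hn : 1 < n) :
    0 ≤ q * s ∧ 0 ≤ q * (1 - s) ∧ q * s ≤ 1 ∧ 0 ≤ q ∧ q ≤ 1 := by
  have h01 : (⟨0, by omega⟩ : Fin n) < ⟨1, by omega⟩ := by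
    simp [Fin.lt_def]
  have huniv : erPairLaw q s Set.univ = 1 := by
    have := h.prob_pair _ _ h01 Set.univ
    rw [Set.preimage_univ, measure_univ] at this
    exact this.symm
  rw [erPairLaw_eval] at huniv
  simp only [Set.mem_univ, if_true] at huniv
  have htr := congrArg ENNReal.toReal huniv
  rw [ENNReal.toReal_add, ENNReal.toReal_add, ENNReal.toReal_add] at htr
  rotate_left
  · exact ENNReal.ofReal_ne_top
  · exact ENNReal.ofReal_ne_top
  · exact ENNReal.add_ne_top.2 ⟨ENNReal.ofReal_ne_top, ENNReal.ofReal_ne_top⟩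
  · exact ENNReal.ofReal_ne_top
  · exact ENNReal.add_ne_top.2 ⟨ENNReal.add_ne_top.2 ⟨ENNReal.ofReal_ne_top,
      ENNReal.ofReal_ne_top⟩, ENNReal.ofReal_ne_top⟩
  · exact ENNReal.ofReal_ne_top
  simp only [ENNReal.toReal_ofReal', ENNReal.toReal_one] at htr
  have e1 : max (q * s) 0 ≥ q * s := le_max_left _ _
  have e2 : max (q * (1 - s)) 0 ≥ q * (1 - s) := le_max_left _ _
  have e3 : max (1 - 2 * q + q * s) 0 ≥ 1 - 2 * q + q * s := le_max_left _ _
  have f1 : max (q * s) 0 ≥ 0 := le_max_right _ _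
  have f2 : max (q * (1 - s)) 0 ≥ 0 := le_max_right _ _
  have f3 : max (1 - 2 * q + q * s) 0 ≥ 0 := le_max_right _ _
  have hqs : 0 ≤ q * s := by
    rcases le_or_gt 0 (q * s) with h' | h'
    · exact h'
    · exfalso; rw [max_eq_right h'.le] at htr; nlinarith
  have hq1s : 0 ≤ q * (1 - s) := by
    rcases le_or_gt 0 (q * (1 - s)) with h' | h'
    · exact h'
    · exfalso; rw [max_eq_right h'.le] at htr; nlinarith
  refine ⟨hqs, hq1s, ?_, ?_, ?_⟩
  · nlinarith [max_eq_left hqs, max_eq_left hq1s]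
  · nlinarith
  · nlinarith [max_eq_left hqs, max_eq_left hq1s]

/-- Probability that a single `A` edge-indicator is `true`. -/
lemma IsCorrER.prob_A_true (h : IsCorrER P n q s A B π) (hn : 1 < n)
    (i j : Fin n) (hij : i < j) :
    P ((fun ω => (A ω i j, B ω (π i) (π j))) ⁻¹' {x | x.1 = true}) = ENNReal.ofReal q := by
  rw [h.prob_pair i j hij, erPairLaw_eval]
  obtain ⟨h1, h2, _, _, _⟩ := h.basic hn
  norm_num
  rw [← ENNReal.ofReal_add h1 h2]
  ring_nf

lemma IsCorrER.prob_B_true (h : IsCorrER P n q s A B π) (hn : 1 < n)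
    (i j : Fin n) (hij : i < j) :
    P ((fun ω => (A ω i j, B ω (π i) (π j))) ⁻¹' {x | x.2 = true}) = ENNReal.ofReal q := by
  rw [h.prob_pair i j hij, erPairLaw_eval]
  obtain ⟨h1, h2, _, _, _⟩ := h.basic hn
  norm_num
  rw [← ENNReal.ofReal_add h1 h2]
  ring_nf

lemma IsCorrER.prob_AB_true (h : IsCorrER P n q s A B π)
    (i j : Fin n) (hij : i < j) :
    P ((fun ω => (A ω i j, B ω (π i) (π j))) ⁻¹' {(true, true)})
      = ENNReal.ofReal (q * s) := by
  rw [h.prob_pair i j hij, erPairLaw_eval]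
  norm_num

end Model

section Indep

variable {Ω : Type*} [MeasurableSpace Ω] {P : Measure Ω} [IsProbabilityMeasure P]
  {n : ℕ} {q s : ℝ} {A B : Ω → Fin n → Fin n → Bool} {π : Equiv.Perm (Fin n)}

/-- Sorted-pair coordinate map. -/
def sp [Nonempty (PairIdx n)] (x j : Fin n) : PairIdx n :=
  if h : x < j then ⟨(x, j), h⟩
  else if h' : j < x then ⟨(j, x), h'⟩
  else Classical.arbitrary _

lemma sp_injOn [Nonempty (PairIdx n)] (x : Fin n) (S : Finset (Fin n)) (hx : x ∉ S) :
    Set.InjOn (sp x) S := by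
  intro a ha b hb hab
  have hax : a ≠ x := fun e => hx (e ▸ ha)
  have hbx : b ≠ x := fun e => hx (e ▸ hb)
  rcases lt_or_gt_of_ne hax.symm with h1 | h1 <;> rcases lt_or_gt_of_ne hbx.symm with h2 | h2
  · rw [sp, dif_pos h1, sp, dif_pos h2] at hab
    have := (Subtype.ext_iff.1 hab)
    simp only [Prod.mk.injEq] at this
    exact this.2
  · rw [sp, dif_pos h1, sp, dif_neg (asymm h2), dif_pos h2] at hab
    have := (Subtype.ext_iff.1 hab)
    simp only [Prod.mk.injEq] at this
    exact absurd this.2 hax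
  · rw [sp, dif_neg (asymm h1), dif_pos h1, sp, dif_pos h2] at hab
    have := (Subtype.ext_iff.1 hab)
    simp only [Prod.mk.injEq] at this
    exact absurd this.1 hax
  · rw [sp, dif_neg (asymm h1), dif_pos h1, sp, dif_neg (asymm h2), dif_pos h2] at hab
    have := (Subtype.ext_iff.1 hab)
    simp only [Prod.mk.injEq] at this
    exact this.1

lemma sp_eval [Nonempty (PairIdx n)] (h : IsCorrER P n q s A B π) (x j : Fin n) (hxj : x ≠ j)
    (ω : Ω) :
    (A ω (sp x j).1.1 (sp x j).1.2, B ω (π (sp x j).1.1) (π (sp x j).1.2))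
      = (A ω x j, B ω (π x) (π j)) := by
  rcases lt_or_gt_of_ne hxj with h1 | h1
  · rw [sp, dif_pos h1]
  · rw [sp, dif_neg (asymm h1), dif_pos h1]
    exact Prod.ext (h.symmA ω x j).symm ((h.symmB ω (π x) (π j)).symm)

lemma IsCorrER.prob_inter_good (h : IsCorrER P n q s A B π) (hn : 1 < n)
    (i : Fin n) (S : Finset (Fin n)) (hiS : i ∉ S) :
    P (⋂ j ∈ S, {ω | A ω i j = true ∧ B ω (π i) (π j) = true})
      = ENNReal.ofReal ((q * s) ^ S.card) := by
  haveI : Nonempty (PairIdx n) :=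
    ⟨⟨(⟨0, by omega⟩, ⟨1, by omega⟩), by simp [Fin.lt_def]⟩⟩
  have hpre : ∀ j ∈ S,
      ((fun p : PairIdx n => fun ω : Ω => (A ω p.1.1 p.1.2, B ω (π p.1.1) (π p.1.2))) (sp i j))
          ⁻¹' {((true : Bool), (true : Bool))}
        = {ω | A ω i j = true ∧ B ω (π i) (π j) = true} := by
    intro j hj
    have hne : i ≠ j := fun e => hiS (e ▸ hj)
    ext ω
    simp only [Set.mem_preimage, Set.mem_singleton_iff, Set.mem_setOf_eq]
    rw [sp_eval h i j hne ω, Prod.ext_iff]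
  have hIm : (⋂ j ∈ S, {ω | A ω i j = true ∧ B ω (π i) (π j) = true})
      = ⋂ p ∈ S.image (sp i),
          ((fun p : PairIdx n => fun ω : Ω => (A ω p.1.1 p.1.2, B ω (π p.1.1) (π p.1.2))) p)
            ⁻¹' {((true : Bool), (true : Bool))} := by
    exact Eq.trans (Set.iInter₂_congr fun j hj => (hpre j hj).symm)
      (biInter_finset_image S (sp i)
        (fun p => ((fun p : PairIdx n => fun ω : Ω =>
          (A ω p.1.1 p.1.2, B ω (π p.1.1) (π p.1.2))) p)
            ⁻¹' {((true : Bool), (true : Bool))})).symm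
  rw [hIm]
  rw [h.indep.measure_inter_preimage_eq_mul (S.image (sp i))
    (sets := fun _ => {((true : Bool), (true : Bool))}) (fun _ _ => .of_discrete)]
  have heach : ∀ p ∈ S.image (sp i),
      P (((fun p : PairIdx n => fun ω : Ω => (A ω p.1.1 p.1.2, B ω (π p.1.1) (π p.1.2))) p)
        ⁻¹' {((true : Bool), (true : Bool))}) = ENNReal.ofReal (q * s) := by
    intro p _
    exact h.prob_AB_true p.1.1 p.1.2 p.2
  rw [Finset.prod_congr rfl heach, Finset.prod_const,
    Finset.card_image_of_injOn (sp_injOn i S hiS),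
    ← ENNReal.ofReal_pow (h.basic hn).1]

lemma IsCorrER.prob_inter_bad (h : IsCorrER P n q s A B π) (hn : 1 < n)
    (i' u : Fin n) (hui : u ≠ i') (S : Finset (Fin n))
    (hS1 : i' ∉ S) (hS2 : u ∉ S) :
    P (⋂ j ∈ S, {ω | A ω i' j = true ∧ B ω (π u) (π j) = true})
      = ENNReal.ofReal ((q ^ 2) ^ S.card) := by
  haveI : Nonempty (PairIdx n) :=
    ⟨⟨(⟨0, by omega⟩, ⟨1, by omega⟩), by simp [Fin.lt_def]⟩⟩
  obtain ⟨hqs0, hq1s0, hqs1, hq0, hq1⟩ := h.basic hn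
  set X : PairIdx n → Ω → Bool × Bool :=
    fun p ω => (A ω p.1.1 p.1.2, B ω (π p.1.1) (π p.1.2)) with hX
  set KA : Finset (PairIdx n) := S.image (sp i') with hKA
  set KB : Finset (PairIdx n) := S.image (sp u) with hKB
  set sets : PairIdx n → Set (Bool × Bool) :=
    fun p => if p ∈ KA then {x | x.1 = true} else {x | x.2 = true} with hsets
  -- basic pair facts
  have hspA : ∀ a ∈ S, ((sp i' a).1 = (i', a) ∧ i' < a) ∨ ((sp i' a).1 = (a, i') ∧ a < i') := by
    intro a ha
    have hax : i' ≠ a := fun e => hS1 (e ▸ ha)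
    rcases lt_or_gt_of_ne hax with h1 | h1
    · left; exact ⟨by rw [sp, dif_pos h1], h1⟩
    · right; exact ⟨by rw [sp, dif_neg (asymm h1), dif_pos h1], h1⟩
  have hspB : ∀ a ∈ S, ((sp u a).1 = (u, a) ∧ u < a) ∨ ((sp u a).1 = (a, u) ∧ a < u) := by
    intro a ha
    have hax : u ≠ a := fun e => hS2 (e ▸ ha)
    rcases lt_or_gt_of_ne hax with h1 | h1
    · left; exact ⟨by rw [sp, dif_pos h1], h1⟩
    · right; exact ⟨by rw [sp, dif_neg (asymm h1), dif_pos h1], h1⟩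
  have hdisj : Disjoint KA KB := by
    rw [Finset.disjoint_left]
    rintro p hpA hpB
    obtain ⟨a, ha, hap⟩ := Finset.mem_image.1 hpA
    obtain ⟨b, hb, hbp⟩ := Finset.mem_image.1 hpB
    have ha' : a ≠ u := fun e => hS2 (e ▸ ha)
    have hb' : b ≠ i' := fun e => hS1 (e ▸ hb)
    have hpp : (sp i' a).1 = (sp u b).1 := by rw [hap, hbp]
    rcases hspA a ha with ⟨e1, o1⟩ | ⟨e1, o1⟩ <;> rcases hspB b hb with ⟨e2, o2⟩ | ⟨e2, o2⟩ <;>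
      rw [e1, e2] at hpp <;> simp only [Prod.mk.injEq] at hpp
    · exact hui (hpp.1.symm)
    · exact hb' hpp.1.symm
    · exact ha' hpp.1
    · exact hui hpp.2.symm
  -- identification of the intersection
  have hpreA : ∀ j ∈ S, (X (sp i' j)) ⁻¹' {x : Bool × Bool | x.1 = true}
      = {ω | A ω i' j = true} := by
    intro j hj
    have hne : i' ≠ j := fun e => hS1 (e ▸ hj)
    ext ω
    simp only [Set.mem_preimage, Set.mem_setOf_eq, hX]
    have he1 : A ω ((sp i' j).1.1) ((sp i' j).1.2) = A ω i' j :=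
      congrArg Prod.fst (sp_eval h i' j hne ω)
    rw [he1]
  have hpreB : ∀ j ∈ S, (X (sp u j)) ⁻¹' {x : Bool × Bool | x.2 = true}
      = {ω | B ω (π u) (π j) = true} := by
    intro j hj
    have hne : u ≠ j := fun e => hS2 (e ▸ hj)
    ext ω
    simp only [Set.mem_preimage, Set.mem_setOf_eq, hX]
    have he2 : B ω (π ((sp u j).1.1)) (π ((sp u j).1.2)) = B ω (π u) (π j) :=
      congrArg Prod.snd (sp_eval h u j hne ω)
    rw [he2]
  have hIm : (⋂ j ∈ S, {ω | A ω i' j = true ∧ B ω (π u) (π j) = true})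
      = ⋂ p ∈ KA ∪ KB, (X p) ⁻¹' (sets p) := by
    have hsplit : (⋂ p ∈ KA ∪ KB, (X p) ⁻¹' (sets p))
        = (⋂ p ∈ KA, (X p) ⁻¹' (sets p)) ∩ (⋂ p ∈ KB, (X p) ⁻¹' (sets p)) := by
      ext ω
      simp only [Set.mem_iInter, Set.mem_inter_iff, Finset.mem_union]
      constructor
      · intro hp
        exact ⟨fun p hpA => hp p (Or.inl hpA), fun p hpB => hp p (Or.inr hpB)⟩
      · rintro ⟨h1, h2⟩ p (hp | hp)
        · exact h1 p hp
        · exact h2 p hp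
    have hbA : (⋂ p ∈ Finset.image (sp i') S, X p ⁻¹' sets p)
        = ⋂ j ∈ S, X (sp i' j) ⁻¹' sets (sp i' j) :=
      biInter_finset_image S (sp i') (fun p => X p ⁻¹' sets p)
    have hbB : (⋂ p ∈ Finset.image (sp u) S, X p ⁻¹' sets p)
        = ⋂ j ∈ S, X (sp u j) ⁻¹' sets (sp u j) :=
      biInter_finset_image S (sp u) (fun p => X p ⁻¹' sets p)
    rw [hsplit, hKA, hKB, hbA, hbB]
    have hA' : ∀ j ∈ S, (X (sp i' j)) ⁻¹' (sets (sp i' j)) = {ω | A ω i' j = true} := by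
      intro j hj
      have : sp i' j ∈ KA := Finset.mem_image.2 ⟨j, hj, rfl⟩
      rw [hsets]
      simp only [this, if_pos]
      exact hpreA j hj
    have hB' : ∀ j ∈ S, (X (sp u j)) ⁻¹' (sets (sp u j)) = {ω | B ω (π u) (π j) = true} := by
      intro j hj
      have hmem : sp u j ∈ KB := Finset.mem_image.2 ⟨j, hj, rfl⟩
      have hnot : sp u j ∉ KA := fun hc => (Finset.disjoint_left.1 hdisj hc) hmem
      rw [hsets]
      simp only [hnot, if_neg]
      exact hpreB j hj
    rw [Set.iInter₂_congr hA', Set.iInter₂_congr hB']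
    ext ω
    simp only [Set.mem_iInter, Set.mem_inter_iff, Set.mem_setOf_eq]
    constructor
    · intro hp
      exact ⟨fun j hj => (hp j hj).1, fun j hj => (hp j hj).2⟩
    · rintro ⟨h1, h2⟩ j hj
      exact ⟨h1 j hj, h2 j hj⟩
  rw [hIm]
  rw [h.indep.measure_inter_preimage_eq_mul (KA ∪ KB) (sets := sets)
    (fun _ _ => .of_discrete)]
  rw [Finset.prod_union hdisj]
  have heachA : ∀ p ∈ KA, P ((X p) ⁻¹' (sets p)) = ENNReal.ofReal q := by
    intro p hp
    rw [hsets]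
    simp only [hp, if_pos]
    exact h.prob_A_true hn p.1.1 p.1.2 p.2
  have heachB : ∀ p ∈ KB, P ((X p) ⁻¹' (sets p)) = ENNReal.ofReal q := by
    intro p hp
    have hnot : p ∉ KA := fun hc => (Finset.disjoint_left.1 hdisj hc) hp
    rw [hsets]
    simp only [hnot, if_neg]
    exact h.prob_B_true hn p.1.1 p.1.2 p.2
  rw [Finset.prod_congr rfl heachA, Finset.prod_congr rfl heachB,
    Finset.prod_const, Finset.prod_const,
    hKA, hKB, Finset.card_image_of_injOn (sp_injOn i' S hS1),
    Finset.card_image_of_injOn (sp_injOn u S hS2),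
    ← pow_add, ← ENNReal.ofReal_pow hq0, ← pow_mul]
  norm_num
  ring_nf

end Indep

section Det
variable {n : ℕ}
lemma wSim_diff_le (A B : Fin n → Fin n → Bool) (π1 π2 : Equiv.Perm (Fin n)) (i k : Fin n) :
    wSim A B π1 i k ≤ wSim A B π2 i k + (univ.filter fun j => π1 j ≠ π2 j).card := by
  unfold wSim
  have hsub : (univ.filter fun j => A i j = true ∧ B k (π1 j) = true)
      ⊆ (univ.filter fun j => A i j = true ∧ B k (π2 j) = true)
        ∪ (univ.filter fun j => π1 j ≠ π2 j) := by
    intro j hj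
    simp only [Finset.mem_filter, Finset.mem_union, Finset.mem_univ, true_and] at *
    by_cases he : π1 j = π2 j
    · exact Or.inl ⟨hj.1, he ▸ hj.2⟩
    · exact Or.inr he
  calc (univ.filter fun j => A i j = true ∧ B k (π1 j) = true).card
      ≤ ((univ.filter fun j => A i j = true ∧ B k (π2 j) = true)
          ∪ (univ.filter fun j => π1 j ≠ π2 j)).card := Finset.card_le_card hsub
    _ ≤ _ := Finset.card_union_le _ _

lemma err_card_symm (π1 π2 : Equiv.Perm (Fin n)) :
    (univ.filter fun j => π1 j ≠ π2 j).card = (univ.filter fun j => π2 j ≠ π1 j).card := by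
  congr 1
  apply Finset.filter_congr
  intro j _
  simp [ne_comm]

lemma top_set_eq (π : Equiv.Perm (Fin n)) (w : Fin n → Fin n → ℕ)
    (hlt : ∀ i i' k' : Fin n, k' ≠ π i' → w i' k' < w i (π i))
    (T : Finset (Fin n × Fin n)) (hcard : T.card = n)
    (htop : ∀ p ∈ T, ∀ p' ∉ T, w p'.1 p'.2 ≤ w p.1 p.2) :
    T = Finset.univ.image fun i => (i, π i) := by
  have hDcard : (Finset.univ.image fun i : Fin n => (i, π i)).card = n := by
    rw [Finset.card_image_of_injective _ (fun a b hab => (Prod.ext_iff.1 hab).1),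
      Finset.card_univ, Fintype.card_fin]
  by_cases hsub : (Finset.univ.image fun i : Fin n => (i, π i)) ⊆ T
  · exact (Finset.eq_of_subset_of_card_le hsub (by rw [hcard, hDcard])).symm
  · exfalso
    obtain ⟨p, hpD, hpT⟩ := Finset.not_subset.1 hsub
    obtain ⟨i, -, hpi⟩ := Finset.mem_image.1 hpD
    by_cases hTD : T ⊆ (Finset.univ.image fun i : Fin n => (i, π i))
    · have hTeq : T = Finset.univ.image fun i : Fin n => (i, π i) :=
        Finset.eq_of_subset_of_card_le hTD (by rw [hcard, hDcard])
      exact hpT (hTeq ▸ hpD)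
    · obtain ⟨p', hp'T, hp'D⟩ := Finset.not_subset.1 hTD
      have hk' : p'.2 ≠ π p'.1 := by
        intro he
        exact hp'D (Finset.mem_image.2 ⟨p'.1, Finset.mem_univ _, by rw [← he]⟩)
      have h1 := htop p' hp'T p hpT
      have h2 := hlt i p'.1 p'.2 hk'
      rw [← hpi] at h1
      simp only at h1
      omega

set_option maxHeartbeats 1000000 in
lemma analytic (n ℓ : ℕ) (q s : ℝ) (hn : 4 ≤ n) (hℓn : ℓ ≤ n)
    (hqs0 : 0 ≤ q * s) (hqs1 : q * s ≤ 1) (hq0 : 0 ≤ q)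
    (h1 : 12 * n * q ^ 2 + 2 ≤ ((ℓ : ℝ) - 1) * q * s)
    (h2 : 16 * max 1 ((n : ℝ) - ℓ) * Real.log n ≤ ((ℓ : ℝ) - 1) * q * s) :
    (n : ℝ) * ((2:ℝ) ^ (⌊((ℓ : ℝ) - 1) * q * s / 2⌋₊) * (1 - q * s / 2) ^ (n - 1))
      + (n : ℝ) ^ 2 * (((2:ℝ) ^ (⌈((ℓ : ℝ) - 1) * q * s / 2 - 2 * ((n:ℝ) - ℓ)⌉₊))⁻¹
          * (1 + q ^ 2) ^ (n - 2)) ≤ 3 / n := by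
  have hn0 : (0:ℝ) < n := by positivity
  have hn4 : (4:ℝ) ≤ n := by exact_mod_cast hn
  have hℓr : (ℓ:ℝ) ≤ n := by exact_mod_cast hℓn
  obtain ⟨μ, hμdef⟩ : ∃ x : ℝ, x = ((ℓ : ℝ) - 1) * q * s := ⟨_, rfl⟩
  obtain ⟨ρ, hρdef⟩ : ∃ x : ℝ, x = (n:ℝ) - ℓ := ⟨_, rfl⟩
  obtain ⟨L, hLdef⟩ : ∃ x : ℝ, x = Real.log n := ⟨_, rfl⟩
  obtain ⟨M, hMdef⟩ : ∃ x : ℝ, x = max 1 ((n : ℝ) - ℓ) := ⟨_, rfl⟩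
  rw [← hμdef] at h1 h2 ⊢
  rw [← hMdef, ← hLdef] at h2
  rw [← hρdef]
  have hρ0 : 0 ≤ ρ := by rw [hρdef]; linarith
  have hρM : ρ ≤ M := by rw [hMdef, hρdef]; exact le_max_right _ _
  have hM1 : (1:ℝ) ≤ M := by rw [hMdef]; exact le_max_left _ _
  have hL0 : 0 < L := by rw [hLdef]; exact Real.log_pos (by linarith)
  have hL2 : 2 * Real.log 2 ≤ L := by
    have h4 : Real.log 4 ≤ L := by
      rw [hLdef]; exact Real.log_le_log (by norm_num) hn4
    have h4' : Real.log 4 = 2 * Real.log 2 := by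
      rw [show (4:ℝ) = 2 ^ 2 by norm_num, Real.log_pow]; push_cast; ring
    linarith
  have l2u : Real.log 2 < 0.6931471808 := Real.log_two_lt_d9
  have l2l : 0.6931471803 < Real.log 2 := Real.log_two_gt_d9
  have l2pos : 0 < Real.log 2 := by linarith
  have hnq20 : 0 ≤ (n:ℝ) * q ^ 2 := mul_nonneg hn0.le (sq_nonneg q)
  have hμ2 : 2 ≤ μ := by linarith
  have hμ16L : 16 * L ≤ μ := by nlinarith [mul_nonneg (by linarith : (0:ℝ) ≤ M - 1) hL0.le]
  have hML : M * L ≤ μ / 16 := by linarith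
  have h2Mlog : 2 * M * Real.log 2 ≤ μ / 16 := by
    nlinarith [mul_nonneg (by linarith : (0:ℝ) ≤ M) (by linarith : (0:ℝ) ≤ L - 2 * Real.log 2)]
  have hrhol : 2 * ρ * Real.log 2 ≤ μ / 16 := by
    nlinarith [mul_nonneg (by linarith : (0:ℝ) ≤ M - ρ) l2pos.le]
  have hnq2 : (n:ℝ) * q ^ 2 ≤ (μ - 2) / 12 := by linarith
  have hexpL : Real.exp L = n := by rw [hLdef]; exact Real.exp_log hn0
  -- term 1
  have hk : ((⌊μ / 2⌋₊ : ℝ)) ≤ μ / 2 := Nat.floor_le (by linarith)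
  have t1a : (2:ℝ) ^ (⌊μ / 2⌋₊) ≤ Real.exp (μ / 2 * Real.log 2) := by
    have he : (2:ℝ) ^ (⌊μ / 2⌋₊) = Real.exp ((⌊μ / 2⌋₊ : ℝ) * Real.log 2) := by
      rw [← Real.log_pow, Real.exp_log (by positivity)]
    rw [he]
    apply Real.exp_le_exp.2
    nlinarith [mul_nonneg (by linarith : (0:ℝ) ≤ μ / 2 - (⌊μ / 2⌋₊ : ℝ)) l2pos.le]
  have t1b : (1 - q * s / 2) ^ (n - 1) ≤ Real.exp (-(((n:ℝ) - 1) * (q * s / 2))) := by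
    have hstep : 1 - q * s / 2 ≤ Real.exp (-(q * s / 2)) := by
      have := Real.add_one_le_exp (-(q * s / 2)); linarith
    calc (1 - q * s / 2) ^ (n - 1) ≤ Real.exp (-(q * s / 2)) ^ (n - 1) :=
          pow_le_pow_left₀ (by linarith) hstep _
      _ = Real.exp (((n : ℕ) - 1 : ℕ) * (-(q * s / 2))) := by rw [← Real.exp_nat_mul]
      _ ≤ Real.exp (-(((n:ℝ) - 1) * (q * s / 2))) := by
          apply Real.exp_le_exp.2
          have hc : (((n : ℕ) - 1 : ℕ) : ℝ) = (n:ℝ) - 1 := by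
            rw [Nat.cast_sub (by omega)]; norm_num
          rw [hc]; apply le_of_eq; ring
  have hnqs : μ ≤ ((n:ℝ) - 1) * (q * s) := by
    rw [hμdef]
    have hc : (ℓ:ℝ) - 1 ≤ (n:ℝ) - 1 := by linarith
    calc ((ℓ:ℝ) - 1) * q * s = ((ℓ:ℝ) - 1) * (q * s) := by ring
      _ ≤ ((n:ℝ) - 1) * (q * s) := mul_le_mul_of_nonneg_right hc hqs0
  have term1 : (n : ℝ) * ((2:ℝ) ^ (⌊μ / 2⌋₊) * (1 - q * s / 2) ^ (n - 1)) ≤ 1 / n := by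
    have hb : (2:ℝ) ^ (⌊μ / 2⌋₊) * (1 - q * s / 2) ^ (n - 1)
        ≤ Real.exp (μ / 2 * Real.log 2 - μ / 2) := by
      calc (2:ℝ) ^ (⌊μ / 2⌋₊) * (1 - q * s / 2) ^ (n - 1)
          ≤ Real.exp (μ / 2 * Real.log 2) * Real.exp (-(((n:ℝ) - 1) * (q * s / 2))) :=
            mul_le_mul t1a t1b (pow_nonneg (by linarith) _) (Real.exp_nonneg _)
        _ = Real.exp (μ / 2 * Real.log 2 + -(((n:ℝ) - 1) * (q * s / 2))) := by
            rw [← Real.exp_add]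
        _ ≤ Real.exp (μ / 2 * Real.log 2 - μ / 2) := by
            apply Real.exp_le_exp.2; linarith
    calc (n : ℝ) * ((2:ℝ) ^ (⌊μ / 2⌋₊) * (1 - q * s / 2) ^ (n - 1))
        ≤ Real.exp L * Real.exp (μ / 2 * Real.log 2 - μ / 2) := by
          rw [hexpL]
          exact mul_le_mul_of_nonneg_left hb (le_of_lt hn0)
      _ = Real.exp (L + (μ / 2 * Real.log 2 - μ / 2)) := by rw [← Real.exp_add]
      _ ≤ Real.exp (-L) := by
          apply Real.exp_le_exp.2
          have p1 : 0 ≤ (μ - 16 * L) * (1 - Real.log 2) :=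
            mul_nonneg (by linarith) (by linarith)
          have p2 : 0 ≤ L * (0.6931471808 - Real.log 2) :=
            mul_nonneg hL0.le (by linarith)
          nlinarith [p1, p2]
      _ = 1 / n := by rw [Real.exp_neg, hexpL]; ring
  -- term 2
  have hm : μ / 2 - 2 * ρ ≤ (⌈μ / 2 - 2 * ρ⌉₊ : ℝ) := Nat.le_ceil _
  have h2m : Real.exp ((μ / 2 - 2 * ρ) * Real.log 2) ≤ (2:ℝ) ^ (⌈μ / 2 - 2 * ρ⌉₊) := by
    have he : (2:ℝ) ^ (⌈μ / 2 - 2 * ρ⌉₊) = Real.exp ((⌈μ / 2 - 2 * ρ⌉₊ : ℝ) * Real.log 2) := by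
      rw [← Real.log_pow, Real.exp_log (by positivity)]
    rw [he]
    apply Real.exp_le_exp.2
    nlinarith [mul_nonneg (by linarith : (0:ℝ) ≤ (⌈μ / 2 - 2 * ρ⌉₊ : ℝ) - (μ / 2 - 2 * ρ))
      l2pos.le]
  have t2a : ((2:ℝ) ^ (⌈μ / 2 - 2 * ρ⌉₊))⁻¹ ≤ Real.exp (-((μ / 2 - 2 * ρ) * Real.log 2)) := by
    calc ((2:ℝ) ^ (⌈μ / 2 - 2 * ρ⌉₊))⁻¹
        ≤ (Real.exp ((μ / 2 - 2 * ρ) * Real.log 2))⁻¹ :=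
          inv_anti₀ (Real.exp_pos _) h2m
      _ = Real.exp (-((μ / 2 - 2 * ρ) * Real.log 2)) := (Real.exp_neg _).symm
  have t2b : (1 + q ^ 2) ^ (n - 2) ≤ Real.exp ((μ - 2) / 12) := by
    have hstep : 1 + q ^ 2 ≤ Real.exp (q ^ 2) := by
      have := Real.add_one_le_exp (q ^ 2); linarith
    calc (1 + q ^ 2) ^ (n - 2) ≤ Real.exp (q ^ 2) ^ (n - 2) :=
          pow_le_pow_left₀ (by positivity) hstep _
      _ = Real.exp (((n : ℕ) - 2 : ℕ) * (q ^ 2)) := by rw [← Real.exp_nat_mul]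
      _ ≤ Real.exp ((μ - 2) / 12) := by
          apply Real.exp_le_exp.2
          have hc : (((n : ℕ) - 2 : ℕ) : ℝ) ≤ (n:ℝ) := by
            exact_mod_cast Nat.sub_le n 2
          nlinarith [mul_le_mul_of_nonneg_right hc (sq_nonneg q)]
  have term2 : (n : ℝ) ^ 2 * (((2:ℝ) ^ (⌈μ / 2 - 2 * ρ⌉₊))⁻¹ * (1 + q ^ 2) ^ (n - 2))
      ≤ 1 / n := by
    have hb : ((2:ℝ) ^ (⌈μ / 2 - 2 * ρ⌉₊))⁻¹ * (1 + q ^ 2) ^ (n - 2)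
        ≤ Real.exp (-((μ / 2 - 2 * ρ) * Real.log 2) + (μ - 2) / 12) := by
      rw [Real.exp_add]
      exact mul_le_mul t2a t2b (pow_nonneg (by positivity) _) (Real.exp_nonneg _)
    calc (n : ℝ) ^ 2 * (((2:ℝ) ^ (⌈μ / 2 - 2 * ρ⌉₊))⁻¹ * (1 + q ^ 2) ^ (n - 2))
        ≤ Real.exp (2 * L) * Real.exp (-((μ / 2 - 2 * ρ) * Real.log 2) + (μ - 2) / 12) := by
          have he2 : Real.exp (2 * L) = (n:ℝ) ^ 2 := by
            rw [two_mul, Real.exp_add, hexpL]; ring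
          rw [he2]
          exact mul_le_mul_of_nonneg_left hb (by positivity)
      _ = Real.exp (2 * L + (-((μ / 2 - 2 * ρ) * Real.log 2) + (μ - 2) / 12)) := by
          rw [← Real.exp_add]
      _ ≤ Real.exp (-L) := by
          apply Real.exp_le_exp.2
          have p1 : 0 ≤ (μ - 16 * L) * (Real.log 2 / 2 - 7 / 48) :=
            mul_nonneg (by linarith) (by linarith)
          have p2 : 0 ≤ L * (Real.log 2 - 0.6931471803) :=
            mul_nonneg hL0.le (by linarith)
          nlinarith [p1, p2, hrhol]
      _ = 1 / n := by rw [Real.exp_neg, hexpL]; ring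
  have h3 : (1:ℝ) / n + 1 / n ≤ 3 / n := by
    rw [← add_div]
    exact (div_le_div_iff_of_pos_right hn0).2 (by norm_num)
  linarith [term1, term2]


end Det

section Count

variable {Ω : Type*} [MeasurableSpace Ω] {P : Measure Ω} [IsProbabilityMeasure P]
  {n : ℕ} {q s : ℝ} {A B : Ω → Fin n → Fin n → Bool} {π : Equiv.Perm (Fin n)}

omit [IsProbabilityMeasure P] in
lemma IsCorrER.count_good (h : IsCorrER P n q s A B π) (ω : Ω) (i : Fin n) :
    ((univ.erase i).filter fun j =>
        ω ∈ ({ω' | A ω' i j = true ∧ B ω' (π i) (π j) = true} : Set Ω)).card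
      = wSim (A ω) (B ω) π i (π i) := by
  have hset : ((univ.erase i).filter fun j =>
        ω ∈ ({ω' | A ω' i j = true ∧ B ω' (π i) (π j) = true} : Set Ω))
      = univ.filter fun j => A ω i j = true ∧ B ω (π i) (π j) = true := by
    ext j
    constructor
    · intro hj
      rw [Finset.mem_filter] at hj
      rw [Finset.mem_filter]
      exact ⟨Finset.mem_univ j, hj.2⟩
    · intro hj
      rw [Finset.mem_filter] at hj
      have hj2 : A ω i j = true ∧ B ω (π i) (π j) = true := hj.2
      rw [Finset.mem_filter, Finset.mem_erase]
      refine ⟨⟨?_, Finset.mem_univ j⟩, hj2⟩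
      rintro rfl
      rw [h.diagA ω] at hj2
      exact absurd hj2.1 (by simp)
  rw [hset]
  rfl

omit [IsProbabilityMeasure P] in
lemma IsCorrER.count_bad (h : IsCorrER P n q s A B π) (ω : Ω) (i' u : Fin n) :
    (((univ.erase i').erase u).filter fun j =>
        ω ∈ ({ω' | A ω' i' j = true ∧ B ω' (π u) (π j) = true} : Set Ω)).card
      = wSim (A ω) (B ω) π i' (π u) := by
  have hset : (((univ.erase i').erase u).filter fun j =>
        ω ∈ ({ω' | A ω' i' j = true ∧ B ω' (π u) (π j) = true} : Set Ω))
      = univ.filter fun j => A ω i' j = true ∧ B ω (π u) (π j) = true := by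
    ext j
    constructor
    · intro hj
      rw [Finset.mem_filter] at hj
      rw [Finset.mem_filter]
      exact ⟨Finset.mem_univ j, hj.2⟩
    · intro hj
      rw [Finset.mem_filter] at hj
      have hj2 : A ω i' j = true ∧ B ω (π u) (π j) = true := hj.2
      rw [Finset.mem_filter, Finset.mem_erase, Finset.mem_erase]
      refine ⟨⟨?_, ?_, Finset.mem_univ j⟩, hj2⟩
      · rintro rfl
        rw [h.diagB ω] at hj2
        exact absurd hj2.2 (by simp)
      · rintro rfl
        rw [h.diagA ω] at hj2
        exact absurd hj2.1 (by simp)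
  rw [hset]
  rfl

lemma IsCorrER.measSet_event (h : IsCorrER P n q s A B π) (i j k m : Fin n) :
    MeasurableSet {ω | A ω i j = true ∧ B ω k m = true} := by
  have hset : {ω | A ω i j = true ∧ B ω k m = true}
      = ((fun ω => A ω i j) ⁻¹' {true}) ∩ ((fun ω => B ω k m) ⁻¹' {true}) := by
    ext ω; simp [Set.mem_setOf_eq]
  rw [hset]
  exact (h.measA i j .of_discrete).inter (h.measB k m .of_discrete)

lemma IsCorrER.meas_wSim (h : IsCorrER P n q s A B π) (π1 : Equiv.Perm (Fin n)) (i k : Fin n) :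
    Measurable fun ω => wSim (A ω) (B ω) π1 i k := by
  have hrw : (fun ω => wSim (A ω) (B ω) π1 i k)
      = fun ω => ∑ j, if A ω i j = true ∧ B ω k (π1 j) = true then 1 else 0 := by
    funext ω
    rw [wSim, Finset.card_filter]
  rw [hrw]
  apply Finset.measurable_sum
  intro j _
  exact Measurable.ite (h.measSet_event i j k (π1 j)) measurable_const measurable_const

end Count

/-!
STATEMENT 17 (last stage of seeded matching): let `0 ≤ ℓ ≤ n` with
`(ℓ−1)qs ≥ 12nq² + 2` and `(ℓ−1)qs ≥ 16·max{1, n−ℓ}·log n`.  Then with probability at least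
`1 − 3/n`, simultaneously for every permutation `π1` with at most `n − ℓ` errors w.r.t. `π*`,
setting `w_{ik} = Σ_j A_{ij}B_{k,π1(j)}`: `min_i w_{i,π*(i)} > max_{k≠π*(i)} w_{ik}`; hence
the index pairs of the `n` largest values of `w` are exactly `{(i,π*(i))}`, and the final
step of the seeded matching algorithm outputs `π̂ = π*`.
-/
theorem seeded_matching_last_stage
    (n : ℕ) (q s : ℝ) (ℓ : ℕ) (Ω : Type*) [MeasurableSpace Ω] (P : Measure Ω)
    [IsProbabilityMeasure P]
    (A B : Ω → Fin n → Fin n → Bool) (π : Equiv.Perm (Fin n))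
    (hmodel : IsCorrER P n q s A B π)
    (hℓn : ℓ ≤ n)
    (h1 : 12 * n * q ^ 2 + 2 ≤ ((ℓ : ℝ) - 1) * q * s)
    (h2 : 16 * max 1 ((n : ℝ) - ℓ) * Real.log n ≤ ((ℓ : ℝ) - 1) * q * s) :
    ENNReal.ofReal (1 - 3 / n) ≤
      P {ω | ∀ π1 : Equiv.Perm (Fin n),
          (univ.filter fun i => π1 i ≠ π i).card ≤ n - ℓ →
          (∀ i i' k' : Fin n, k' ≠ π i' →
              wSim (A ω) (B ω) π1 i' k' < wSim (A ω) (B ω) π1 i (π i)) ∧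
          ∀ T : Finset (Fin n × Fin n), T.card = n →
            (∀ p ∈ T, ∀ p' ∉ T, wSim (A ω) (B ω) π1 p'.1 p'.2 ≤ wSim (A ω) (B ω) π1 p.1 p.2) →
            T = Finset.univ.image fun i => (i, π i)} := by
  rcases Nat.lt_or_ge n 4 with hn4 | hn4
  · -- small n : the bound is trivial (or the event is everything when n = 0)
    interval_cases n
    · -- n = 0
      have hS : {ω | ∀ π1 : Equiv.Perm (Fin 0),
          (univ.filter fun i => π1 i ≠ π i).card ≤ 0 - ℓ →
          (∀ i i' k' : Fin 0, k' ≠ π i' →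
              wSim (A ω) (B ω) π1 i' k' < wSim (A ω) (B ω) π1 i (π i)) ∧
          ∀ T : Finset (Fin 0 × Fin 0), T.card = 0 →
            (∀ p ∈ T, ∀ p' ∉ T, wSim (A ω) (B ω) π1 p'.1 p'.2 ≤ wSim (A ω) (B ω) π1 p.1 p.2) →
            T = Finset.univ.image fun i => (i, π i)} = Set.univ := by
        ext ω
        simp only [Set.mem_setOf_eq, Set.mem_univ, iff_true]
        intro π1 _
        constructor
        · intro i; exact i.elim0
        · intro T _ _
          have h1 : T = ∅ := Finset.eq_empty_of_forall_notMem (fun x _ => x.1.elim0)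
          have h2 : (Finset.univ.image fun i : Fin 0 => (i, π i)) = ∅ := by
            simp
          rw [h1, h2]
      rw [hS, measure_univ]
      simp
    · -- n = 1
      have : ENNReal.ofReal (1 - 3 / ((1 : ℕ) : ℝ)) = 0 :=
        ENNReal.ofReal_eq_zero.2 (by push_cast; norm_num)
      rw [this]; exact zero_le
    · have : ENNReal.ofReal (1 - 3 / ((2 : ℕ) : ℝ)) = 0 :=
        ENNReal.ofReal_eq_zero.2 (by push_cast; norm_num)
      rw [this]; exact zero_le
    · have : ENNReal.ofReal (1 - 3 / ((3 : ℕ) : ℝ)) = 0 :=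
        ENNReal.ofReal_eq_zero.2 (by push_cast; norm_num)
      rw [this]; exact zero_le
  · -- main case : n ≥ 4
    have hn2 : 1 < n := by omega
    obtain ⟨hqs0, hq1s0, hqs1, hq0, hq1⟩ := hmodel.basic hn2
    -- thresholds
    set k0 : ℕ := ⌊((ℓ : ℝ) - 1) * q * s / 2⌋₊ with hk0
    set m0 : ℕ := ⌈((ℓ : ℝ) - 1) * q * s / 2 - 2 * ((n : ℝ) - ℓ)⌉₊ with hm0
    -- failure events
    set F1 : Fin n → Set Ω := fun i =>
      {ω | (wSim (A ω) (B ω) π i (π i) : ℝ) ≤ ((ℓ : ℝ) - 1) * q * s / 2} with hF1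
    set F2 : Fin n → Fin n → Set Ω := fun i' k' =>
      {ω | ((ℓ : ℝ) - 1) * q * s / 2 - 2 * ((n : ℝ) - ℓ)
          ≤ (wSim (A ω) (B ω) π i' k' : ℝ)} with hF2
    set G : Set Ω := (⋂ i, (F1 i)ᶜ) ∩ (⋂ i', ⋂ k', ⋂ (_ : k' ≠ π i'), (F2 i' k')ᶜ) with hG
    -- measurability
    have hF1m : ∀ i, MeasurableSet (F1 i) := by
      intro i
      have : F1 i = (fun ω => wSim (A ω) (B ω) π i (π i))
          ⁻¹' {x : ℕ | (x : ℝ) ≤ ((ℓ : ℝ) - 1) * q * s / 2} := rfl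
      rw [this]
      exact hmodel.meas_wSim π i (π i) .of_discrete
    have hF2m : ∀ i' k', MeasurableSet (F2 i' k') := by
      intro i' k'
      have : F2 i' k' = (fun ω => wSim (A ω) (B ω) π i' k')
          ⁻¹' {x : ℕ | ((ℓ : ℝ) - 1) * q * s / 2 - 2 * ((n : ℝ) - ℓ) ≤ (x : ℝ)} := rfl
      rw [this]
      exact hmodel.meas_wSim π i' k' .of_discrete
    have hGm : MeasurableSet G := by
      rw [hG]
      exact (MeasurableSet.iInter fun i => (hF1m i).compl).inter
        (MeasurableSet.iInter fun i' => MeasurableSet.iInter fun k' =>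
          MeasurableSet.iInter fun _ => (hF2m i' k').compl)
    -- individual failure probability bounds
    have hbound1 : ∀ i, P (F1 i)
        ≤ ENNReal.ofReal ((2:ℝ) ^ k0 * (1 - q * s / 2) ^ (n - 1)) := by
      intro i
      have hEm : ∀ j, MeasurableSet
          ({ω | A ω i j = true ∧ B ω (π i) (π j) = true} : Set Ω) :=
        fun j => hmodel.measSet_event i j (π i) (π j)
      have hPprod : ∀ S ⊆ univ.erase i,
          P (⋂ j ∈ S, ({ω | A ω i j = true ∧ B ω (π i) (π j) = true} : Set Ω))
            = ENNReal.ofReal ((q * s) ^ S.card) := by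
        intro S hS
        exact hmodel.prob_inter_good hn2 i S
          (fun hiS => (Finset.mem_erase.1 (hS hiS)).1 rfl)
      have hN : ∀ ω : Ω, wSim (A ω) (B ω) π i (π i)
          = ((univ.erase i).filter fun j =>
              ω ∈ ({ω' | A ω' i j = true ∧ B ω' (π i) (π j) = true} : Set Ω)).card := by
        intro ω
        rw [← hmodel.count_good ω i]
      have htail := tail_lower (P := P) (univ.erase i)
        (fun j => {ω | A ω i j = true ∧ B ω (π i) (π j) = true}) hEm (q * s) hqs0 hPprod
        (fun ω => wSim (A ω) (B ω) π i (π i))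
        (fun ω => (hmodel.count_good ω i).symm.trans
          (congrArg Finset.card (filter_inst_irrel _ _ _ _))) k0
      have hcard : (univ.erase i).card = n - 1 := by
        rw [Finset.card_erase_of_mem (Finset.mem_univ i), Finset.card_univ, Fintype.card_fin]
      rw [hcard] at htail
      have hsub : F1 i ⊆ {ω | wSim (A ω) (B ω) π i (π i) ≤ k0} := by
        intro ω hω
        rw [Set.mem_setOf_eq]
        exact Nat.le_floor hω
      have hmono : (P (F1 i)).toReal
          ≤ (P {ω | wSim (A ω) (B ω) π i (π i) ≤ k0}).toReal :=
        ENNReal.toReal_mono (measure_ne_top _ _) (measure_mono hsub)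
      have hpos : (0:ℝ) < (2⁻¹:ℝ) ^ k0 := by positivity
      have hPF : (P (F1 i)).toReal ≤ (2:ℝ) ^ k0 * (1 - q * s / 2) ^ (n - 1) := by
        have h' : (2⁻¹:ℝ) ^ k0 * (P (F1 i)).toReal ≤ (1 - q * s / 2) ^ (n - 1) :=
          le_trans (mul_le_mul_of_nonneg_left hmono hpos.le) htail
        have hid : ((2:ℝ) ^ k0) * ((2⁻¹:ℝ) ^ k0) = 1 := by
          rw [← mul_pow]; norm_num
        calc (P (F1 i)).toReal
            = ((2:ℝ) ^ k0) * ((2⁻¹:ℝ) ^ k0 * (P (F1 i)).toReal) := by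
              rw [← mul_assoc, hid, one_mul]
          _ ≤ ((2:ℝ) ^ k0) * ((1 - q * s / 2) ^ (n - 1)) :=
              mul_le_mul_of_nonneg_left h' (by positivity)
      exact (ENNReal.le_ofReal_iff_toReal_le (measure_ne_top _ _)
        (mul_nonneg (by positivity) (pow_nonneg (by linarith) _))).2 hPF
    have hbound2 : ∀ i' k', k' ≠ π i' → P (F2 i' k')
        ≤ ENNReal.ofReal (((2:ℝ) ^ m0)⁻¹ * (1 + q ^ 2) ^ (n - 2)) := by
      intro i' k' hk'
      have hui : π.symm k' ≠ i' := by
        intro he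
        exact hk' (by rw [← he, Equiv.apply_symm_apply])
      have hπu : π (π.symm k') = k' := Equiv.apply_symm_apply π k'
      have hEm : ∀ j, MeasurableSet
          ({ω | A ω i' j = true ∧ B ω (π (π.symm k')) (π j) = true} : Set Ω) :=
        fun j => hmodel.measSet_event i' j (π (π.symm k')) (π j)
      have hPprod : ∀ S ⊆ (univ.erase i').erase (π.symm k'),
          P (⋂ j ∈ S, ({ω | A ω i' j = true ∧ B ω (π (π.symm k')) (π j) = true} : Set Ω))
            = ENNReal.ofReal ((q ^ 2) ^ S.card) := by
        intro S hS
        refine hmodel.prob_inter_bad hn2 i' (π.symm k') hui S ?_ ?_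
        · intro hiS
          exact (Finset.mem_erase.1 (Finset.mem_erase.1 (hS hiS)).2).1 rfl
        · intro hiS
          exact (Finset.mem_erase.1 (hS hiS)).1 rfl
      have htail := tail_upper (P := P) ((univ.erase i').erase (π.symm k'))
        (fun j => {ω | A ω i' j = true ∧ B ω (π (π.symm k')) (π j) = true}) hEm (q ^ 2)
        (by positivity) hPprod
        (fun ω => wSim (A ω) (B ω) π i' (π (π.symm k')))
        (fun ω => (hmodel.count_bad ω i' (π.symm k')).symm.trans
          (congrArg Finset.card (filter_inst_irrel _ _ _ _))) m0
      have hcard : ((univ.erase i').erase (π.symm k')).card = n - 2 := by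
        rw [Finset.card_erase_of_mem (Finset.mem_erase.2 ⟨hui, Finset.mem_univ _⟩),
          Finset.card_erase_of_mem (Finset.mem_univ i'), Finset.card_univ, Fintype.card_fin]
        omega
      rw [hcard, hπu] at htail
      have hsub : F2 i' k' ⊆ {ω | m0 ≤ wSim (A ω) (B ω) π i' k'} := by
        intro ω hω
        rw [Set.mem_setOf_eq]
        exact Nat.ceil_le.2 hω
      have hmono : (P (F2 i' k')).toReal
          ≤ (P {ω | m0 ≤ wSim (A ω) (B ω) π i' k'}).toReal :=
        ENNReal.toReal_mono (measure_ne_top _ _) (measure_mono hsub)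
      have hpos : (0:ℝ) < (2:ℝ) ^ m0 := by positivity
      have hPF : (P (F2 i' k')).toReal ≤ ((2:ℝ) ^ m0)⁻¹ * (1 + q ^ 2) ^ (n - 2) := by
        have h' : (2:ℝ) ^ m0 * (P (F2 i' k')).toReal ≤ (1 + q ^ 2) ^ (n - 2) :=
          le_trans (mul_le_mul_of_nonneg_left hmono (by positivity)) htail
        calc (P (F2 i' k')).toReal
            = ((2:ℝ) ^ m0)⁻¹ * ((2:ℝ) ^ m0 * (P (F2 i' k')).toReal) := by
              rw [← mul_assoc, inv_mul_cancel₀ (ne_of_gt hpos), one_mul]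
          _ ≤ ((2:ℝ) ^ m0)⁻¹ * (1 + q ^ 2) ^ (n - 2) :=
              mul_le_mul_of_nonneg_left h' (by positivity)
      exact (ENNReal.le_ofReal_iff_toReal_le (measure_ne_top _ _)
        (mul_nonneg (by positivity) (by positivity))).2 hPF
    -- union bound
    have hunion : P Gᶜ ≤ ENNReal.ofReal (3 / n) := by
      have hGc : Gᶜ ⊆ (⋃ i, F1 i) ∪ (⋃ i', ⋃ k', ⋃ (_ : k' ≠ π i'), F2 i' k') := by
        intro ω hω
        by_contra hmem
        simp only [Set.mem_union, Set.mem_iUnion, not_or, not_exists] at hmem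
        apply hω
        rw [hG]
        constructor
        · exact Set.mem_iInter.2 fun i => hmem.1 i
        · refine Set.mem_iInter.2 fun i' => Set.mem_iInter.2 fun kk =>
            Set.mem_iInter.2 fun hkk => hmem.2 i' kk hkk
      have hcard1 : P (⋃ i, F1 i)
          ≤ (n : ℝ≥0∞) * ENNReal.ofReal ((2:ℝ) ^ k0 * (1 - q * s / 2) ^ (n - 1)) := by
        calc P (⋃ i, F1 i) ≤ ∑' i, P (F1 i) := measure_iUnion_le _
          _ = ∑ i, P (F1 i) := tsum_fintype _
          _ ≤ ∑ _i : Fin n, ENNReal.ofReal ((2:ℝ) ^ k0 * (1 - q * s / 2) ^ (n - 1)) :=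
              Finset.sum_le_sum fun i _ => hbound1 i
          _ = (n : ℝ≥0∞) * ENNReal.ofReal ((2:ℝ) ^ k0 * (1 - q * s / 2) ^ (n - 1)) := by
              rw [Finset.sum_const, Finset.card_univ, Fintype.card_fin, nsmul_eq_mul]
      have hF2u : ∀ i' k', P (⋃ (_ : k' ≠ π i'), F2 i' k')
          ≤ ENNReal.ofReal (((2:ℝ) ^ m0)⁻¹ * (1 + q ^ 2) ^ (n - 2)) := by
        intro i' k'
        by_cases hc : k' ≠ π i'
        · exact le_trans (measure_mono (Set.iUnion_subset fun _ => subset_rfl))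
            (hbound2 i' k' hc)
        · have : (⋃ (_ : k' ≠ π i'), F2 i' k') = ∅ := by simp [hc]
          rw [this]
          simp
      have hcard2 : P (⋃ i', ⋃ k', ⋃ (_ : k' ≠ π i'), F2 i' k')
          ≤ (n : ℝ≥0∞) * ((n : ℝ≥0∞)
              * ENNReal.ofReal (((2:ℝ) ^ m0)⁻¹ * (1 + q ^ 2) ^ (n - 2))) := by
        calc P (⋃ i', ⋃ k', ⋃ (_ : k' ≠ π i'), F2 i' k')
            ≤ ∑' i', P (⋃ k', ⋃ (_ : k' ≠ π i'), F2 i' k') := measure_iUnion_le _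
          _ = ∑ i', P (⋃ k', ⋃ (_ : k' ≠ π i'), F2 i' k') := tsum_fintype _
          _ ≤ ∑ _i' : Fin n, ((n : ℝ≥0∞)
              * ENNReal.ofReal (((2:ℝ) ^ m0)⁻¹ * (1 + q ^ 2) ^ (n - 2))) := by
              refine Finset.sum_le_sum fun i' _ => ?_
              calc P (⋃ k', ⋃ (_ : k' ≠ π i'), F2 i' k')
                  ≤ ∑' k', P (⋃ (_ : k' ≠ π i'), F2 i' k') := measure_iUnion_le _
                _ = ∑ k', P (⋃ (_ : k' ≠ π i'), F2 i' k') := tsum_fintype _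
                _ ≤ ∑ _k' : Fin n,
                    ENNReal.ofReal (((2:ℝ) ^ m0)⁻¹ * (1 + q ^ 2) ^ (n - 2)) :=
                    Finset.sum_le_sum fun k' _ => hF2u i' k'
                _ = (n : ℝ≥0∞)
                    * ENNReal.ofReal (((2:ℝ) ^ m0)⁻¹ * (1 + q ^ 2) ^ (n - 2)) := by
                    rw [Finset.sum_const, Finset.card_univ, Fintype.card_fin, nsmul_eq_mul]
          _ = (n : ℝ≥0∞) * ((n : ℝ≥0∞)
              * ENNReal.ofReal (((2:ℝ) ^ m0)⁻¹ * (1 + q ^ 2) ^ (n - 2))) := by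
              rw [Finset.sum_const, Finset.card_univ, Fintype.card_fin, nsmul_eq_mul]
      calc P Gᶜ ≤ P ((⋃ i, F1 i) ∪ (⋃ i', ⋃ k', ⋃ (_ : k' ≠ π i'), F2 i' k')) :=
            measure_mono hGc
        _ ≤ P (⋃ i, F1 i) + P (⋃ i', ⋃ k', ⋃ (_ : k' ≠ π i'), F2 i' k') :=
            measure_union_le _ _
        _ ≤ (n : ℝ≥0∞) * ENNReal.ofReal ((2:ℝ) ^ k0 * (1 - q * s / 2) ^ (n - 1))
            + (n : ℝ≥0∞) * ((n : ℝ≥0∞)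
              * ENNReal.ofReal (((2:ℝ) ^ m0)⁻¹ * (1 + q ^ 2) ^ (n - 2))) :=
            add_le_add hcard1 hcard2
        _ = ENNReal.ofReal ((n : ℝ) * ((2:ℝ) ^ k0 * (1 - q * s / 2) ^ (n - 1))
            + (n : ℝ) ^ 2 * (((2:ℝ) ^ m0)⁻¹ * (1 + q ^ 2) ^ (n - 2))) := by
            rw [← ENNReal.ofReal_natCast n, ← ENNReal.ofReal_mul (by positivity),
              ← ENNReal.ofReal_mul (by positivity), ← ENNReal.ofReal_mul (by positivity),
              ← ENNReal.ofReal_add]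
            · congr 1
              have h1r : (0:ℝ) ≤ 1 - q * s / 2 := by linarith
              ring
            · exact mul_nonneg (by positivity)
                (mul_nonneg (by positivity) (pow_nonneg (by linarith) _))
            · positivity
        _ ≤ ENNReal.ofReal (3 / n) := by
            apply ENNReal.ofReal_le_ofReal
            exact analytic n ℓ q s hn4 hℓn hqs0 hqs1 hq0 h1 h2
    -- from the union bound to the good event
    have hGP : ENNReal.ofReal (1 - 3 / n) ≤ P G := by
      have hc : P Gᶜ = 1 - P G := prob_compl_eq_one_sub hGm
      calc ENNReal.ofReal (1 - 3 / n) = 1 - ENNReal.ofReal (3 / n) := by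
            rw [ENNReal.ofReal_sub _ (by positivity), ENNReal.ofReal_one]
        _ ≤ 1 - P Gᶜ := tsub_le_tsub_left hunion 1
        _ = 1 - (1 - P G) := by rw [hc]
        _ = P G := ENNReal.sub_sub_cancel (by norm_num) prob_le_one
    -- the good event implies the conclusion
    refine le_trans hGP (measure_mono ?_)
    intro ω hω
    rw [hG] at hω
    obtain ⟨hg, hb⟩ := hω
    rw [Set.mem_setOf_eq]
    intro π1 hπ1
    have herr : ((univ.filter fun j => π1 j ≠ π j).card : ℝ) ≤ (n : ℝ) - ℓ := by
      have hcast : (((n - ℓ : ℕ)) : ℝ) = (n : ℝ) - ℓ := by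
        rw [Nat.cast_sub hℓn]
      calc ((univ.filter fun j => π1 j ≠ π j).card : ℝ)
          ≤ ((n - ℓ : ℕ) : ℝ) := Nat.cast_le.2 hπ1
        _ = (n : ℝ) - ℓ := hcast
    have key : ∀ i i' k' : Fin n, k' ≠ π i' →
        wSim (A ω) (B ω) π1 i' k' < wSim (A ω) (B ω) π1 i (π i) := by
      intro i i' k' hk'
      have hgood : ((ℓ : ℝ) - 1) * q * s / 2 < (wSim (A ω) (B ω) π i (π i) : ℝ) := by
        have hmem := Set.mem_iInter.1 hg i
        rw [Set.mem_compl_iff, hF1] at hmem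
        simpa using not_le.1 hmem
      have hbad : (wSim (A ω) (B ω) π i' k' : ℝ)
          < ((ℓ : ℝ) - 1) * q * s / 2 - 2 * ((n : ℝ) - ℓ) := by
        have hmem := Set.mem_iInter.1 (Set.mem_iInter.1 (Set.mem_iInter.1 hb i') k') hk'
        rw [Set.mem_compl_iff, hF2] at hmem
        simpa using not_le.1 hmem
      have d1 := wSim_diff_le (A ω) (B ω) π π1 i (π i)
      have d2 := wSim_diff_le (A ω) (B ω) π1 π i' k'
      have hsymm := err_card_symm π π1
      rw [hsymm] at d1
      have c1 : (wSim (A ω) (B ω) π i (π i) : ℝ)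
          ≤ (wSim (A ω) (B ω) π1 i (π i) : ℝ)
            + ((univ.filter fun j => π1 j ≠ π j).card : ℝ) := by
        exact_mod_cast d1
      have c2 : (wSim (A ω) (B ω) π1 i' k' : ℝ)
          ≤ (wSim (A ω) (B ω) π i' k' : ℝ)
            + ((univ.filter fun j => π1 j ≠ π j).card : ℝ) := by
        exact_mod_cast d2
      have hfin : (wSim (A ω) (B ω) π1 i' k' : ℝ) < (wSim (A ω) (B ω) π1 i (π i) : ℝ) := by
        linarith
      exact_mod_cast hfin
    exact ⟨key, fun T hT htop => top_set_eq π (wSim (A ω) (B ω) π1) key T hT htop⟩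


end GraphMatching
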